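/- arXiv:2503.08432 — 3 statements merged into one kernel-verified Lean document; each statement's English description precedes it below -/
import Mathlib

section
/- Let {s_k} and {a_k} be nonnegative real sequences, {λ_k} ⊂ (0,1), and {b_k} a real sequence with ∑ b_k < ∞. If s_{k+1} ≤ (1−λ_k)s_k + a_k + b_k for all k ≥ 1 and a_k ≤ λ_k C for some constant C ≥ 0, then the sequence {s_k} is bounded. -/
theorem stmt_10 (s a b : ℕ → ℝ) (lam : ℕ → ℝ) (C : ℝ)
    (hs : ∀ k, 0 ≤ s k) (ha : ∀ k, 0 ≤ a k)
    (hlam : ∀ k, lam k ∈ Set.Ioo (0 : ℝ) 1)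
    (hb : Summable b)
    (hC : 0 ≤ C) (haC : ∀ k, a k ≤ lam k * C)
    (hrec : ∀ k ≥ 1, s (k + 1) ≤ (1 - lam k) * s k + a k + b k) :
    ∃ M : ℝ, ∀ k, s k ≤ M := by
  have hba : Summable fun i => |b i| := hb.abs
  set B := ∑' i, |b i| with hB
  have hpart : ∀ k, ∑ i ∈ Finset.Ico 1 k, |b i| ≤ B := by
    intro k
    exact Summable.sum_le_tsum _ (fun i _ => abs_nonneg _) hba
  have key : ∀ k, 1 ≤ k → s k ≤ max (s 1) C + ∑ i ∈ Finset.Ico 1 k, |b i| := by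
    intro k hk
    induction k with
    | zero => omega
    | succ n ih =>
      rcases Nat.eq_or_lt_of_le hk with h | h
      · simp [← h]
      · have hn : 1 ≤ n := by omega
        have ihn := ih hn
        have hrn := hrec n hn
        obtain ⟨hl0, hl1⟩ := hlam n
        have hmax : (1 - lam n) * s n + a n ≤ (1 - lam n) * (max (s 1) C + ∑ i ∈ Finset.Ico 1 n, |b i|) + lam n * C := by
          gcongr
          · exact haC n
        have hC' : C ≤ max (s 1) C + ∑ i ∈ Finset.Ico 1 n, |b i| := by
          have := Finset.sum_nonneg (fun i (_ : i ∈ Finset.Ico 1 n) => abs_nonneg (b i))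
          have := le_max_right (s 1) C
          linarith
        have hcomb : (1 - lam n) * s n + a n ≤ max (s 1) C + ∑ i ∈ Finset.Ico 1 n, |b i| := by
          nlinarith
        have hsum : ∑ i ∈ Finset.Ico 1 (n + 1), |b i| = (∑ i ∈ Finset.Ico 1 n, |b i|) + |b n| := by
          rw [Finset.sum_Ico_succ_top hn]
        have : s (n + 1) ≤ max (s 1) C + ∑ i ∈ Finset.Ico 1 n, |b i| + b n := by linarith
        have hb' : b n ≤ |b n| := le_abs_self _
        rw [hsum]; linarith
  refine ⟨max (s 0) (max (s 1) C + B), fun k => ?_⟩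
  rcases Nat.eq_zero_or_pos k with h | h
  · subst h; exact le_max_left _ _
  · have := key k h
    have := hpart k
    have := le_max_right (s 0) (max (s 1) C + B)
    linarith
end

section
/- If f : H → ℝ ∪ {+∞} is proper, convex, and lower semicontinuous, then its subdifferential ∂f is a maximal monotone operator. -/
open scoped InnerProductSpace
open Filter Topology

/-- Subdifferential of an extended-real-valued function. -/
def subdiff {H : Type*} [NormedAddCommGroup H] [InnerProductSpace ℝ H]
    (f : H → EReal) (u : H) : Set H :=
  {w : H | ∀ v : H, f u + ((inner ℝ w (v - u) : ℝ) : EReal) ≤ f v}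

section Helpers

variable {H : Type*} [NormedAddCommGroup H] [InnerProductSpace ℝ H]

lemma affine_minorant [CompleteSpace H] (f : H → EReal)
    (hbot : ∀ x, f x ≠ ⊥) (hproper : ∃ x, f x ≠ ⊤)
    (hconv : ∀ x y : H, ∀ t : ℝ, 0 ≤ t → t ≤ 1 →
      f (t • x + (1 - t) • y) ≤ (t : EReal) * f x + ((1 - t : ℝ) : EReal) * f y)
    (hlsc : LowerSemicontinuous f) :
    ∃ (ψ : H →L[ℝ] ℝ) (β : ℝ), ∀ z, ((ψ z + β : ℝ) : EReal) ≤ f z := by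
  obtain ⟨x₀, hx₀⟩ := hproper
  set r₀ : ℝ := (f x₀).toReal with hr₀
  have hfx₀ : f x₀ = (r₀ : EReal) := (EReal.coe_toReal hx₀ (hbot x₀)).symm
  set S : Set (H × ℝ) := {p | f p.1 ≤ (p.2 : EReal)} with hS
  have hSconv : Convex ℝ S := by
    rintro ⟨z, t⟩ hz ⟨z', t'⟩ hz' a b ha hb hab
    simp only [hS, Set.mem_setOf_eq] at hz hz' ⊢
    have hz1 : f z = ((f z).toReal : EReal) :=
      (EReal.coe_toReal (fun h => by simp [h] at hz) (hbot z)).symm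
    have hz1' : f z' = ((f z').toReal : EReal) :=
      (EReal.coe_toReal (fun h => by simp [h] at hz') (hbot z')).symm
    rw [hz1] at hz; rw [hz1'] at hz'
    have h1 : (f z).toReal ≤ t := by exact_mod_cast hz
    have h1' : (f z').toReal ≤ t' := by exact_mod_cast hz'
    have hb' : b = 1 - a := by linarith
    calc f (a • z + b • z') = f (a • z + (1-a) • z') := by rw [hb']
      _ ≤ (a : EReal) * f z + ((1 - a : ℝ) : EReal) * f z' := hconv z z' a ha (by linarith)
      _ ≤ ((a • t + b • t' : ℝ) : EReal) := by
          rw [hz1, hz1', ← EReal.coe_mul, ← EReal.coe_mul, ← EReal.coe_add]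
          apply EReal.coe_le_coe_iff.2
          simp only [smul_eq_mul, hb']
          have := mul_le_mul_of_nonneg_left h1 ha
          have := mul_le_mul_of_nonneg_left h1' (by linarith : (0:ℝ) ≤ 1 - a)
          linarith
  have hSclosed : IsClosed S := by
    have h1 : IsClosed {p : H × EReal | f p.1 ≤ p.2} := hlsc.isClosed_epigraph
    have h2 : Continuous (fun p : H × ℝ => (p.1, (p.2 : EReal))) :=
      continuous_fst.prodMk (continuous_coe_real_ereal.comp continuous_snd)
    exact h1.preimage h2
  have hnot : (x₀, r₀ - 1) ∉ S := by
    simp only [hS, Set.mem_setOf_eq, hfx₀]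
    push_neg
    exact_mod_cast by linarith
  obtain ⟨φ, c, hφ1, hφ2⟩ := geometric_hahn_banach_point_closed hSconv hSclosed hnot
  -- φ (z, t) = φ (z, 0) + t * φ (0, 1)
  set a : ℝ := φ (0, 1) with ha
  set ψ0 : H →L[ℝ] ℝ := φ.comp (ContinuousLinearMap.inl ℝ H ℝ) with hψ0
  have hsplit : ∀ (z : H) (t : ℝ), φ (z, t) = ψ0 z + t * a := by
    intro z t
    have : (z, t) = (z, (0:ℝ)) + t • ((0:H), (1:ℝ)) := by
      simp [Prod.ext_iff]
    rw [this, map_add, map_smul]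
    simp [hψ0, ha, ContinuousLinearMap.inl_apply]
  have hmemS : ∀ (z : H) (t : ℝ), f z ≤ (t : EReal) → c < ψ0 z + t * a := by
    intro z t hzt
    have := hφ2 (z, t) hzt
    rwa [hsplit] at this
  have ha_pos : 0 < a := by
    rcases lt_or_ge 0 a with h | h
    · exact h
    -- if a ≤ 0, get contradiction using (x₀, r₀) and (x₀, r₀ - 1)
    exfalso
    have h1 : c < ψ0 x₀ + r₀ * a := hmemS x₀ r₀ (le_of_eq hfx₀)
    have h2 : ψ0 x₀ + (r₀ - 1) * a < c := by
      have := hφ1; rwa [hsplit] at this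
    nlinarith
  refine ⟨(-(a⁻¹)) • ψ0, c / a, ?_⟩
  intro z
  rcases eq_or_ne (f z) ⊤ with h | h
  · simp [h]
  have hz1 : f z = ((f z).toReal : EReal) := (EReal.coe_toReal h (hbot z)).symm
  rw [hz1]
  apply EReal.coe_le_coe_iff.2
  have := hmemS z (f z).toReal (le_of_eq hz1)
  simp only [ContinuousLinearMap.coe_smul', Pi.smul_apply, smul_eq_mul]
  rw [← mul_le_mul_iff_left₀ ha_pos]
  have heq : (-a⁻¹ * ψ0 z + c / a) * a = -ψ0 z + c := by
    field_simp
  rw [heq]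
  linarith

lemma prox_exists [CompleteSpace H] (f : H → EReal)
    (hbot : ∀ x, f x ≠ ⊥) (hproper : ∃ x, f x ≠ ⊤)
    (hconv : ∀ x y : H, ∀ t : ℝ, 0 ≤ t → t ≤ 1 →
      f (t • x + (1 - t) • y) ≤ (t : EReal) * f x + ((1 - t : ℝ) : EReal) * f y)
    (hlsc : LowerSemicontinuous f)
    (hmin : ∃ (ψ : H →L[ℝ] ℝ) (β : ℝ), ∀ z, ((ψ z + β : ℝ) : EReal) ≤ f z)
    (c : H) :
    ∃ zs : H, f zs ≠ ⊤ ∧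
      ∀ z, f zs + ((‖zs - c‖^2/2 : ℝ) : EReal) ≤ f z + ((‖z - c‖^2/2 : ℝ) : EReal) := by
  obtain ⟨ψ, β, hψ⟩ := hmin
  set q : H → ℝ := fun z => ‖z - c‖^2/2 with hq
  -- lower bound
  set K : ℝ := β + ‖c‖^2/2 - (‖ψ‖ + ‖c‖)^2/2 with hK
  have hlow : ∀ z, (K : EReal) ≤ f z + ((q z : ℝ) : EReal) := by
    intro z
    have h1 : ((ψ z + β : ℝ) : EReal) + ((q z : ℝ) : EReal) ≤ f z + ((q z : ℝ) : EReal) :=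
      add_le_add_left (hψ z) _
    refine le_trans ?_ h1
    rw [← EReal.coe_add]
    apply EReal.coe_le_coe_iff.2
    have h2 : -(‖ψ‖ * ‖z‖) ≤ ψ z := by
      have h2' : |ψ z| ≤ ‖ψ‖ * ‖z‖ := by
        simpa [Real.norm_eq_abs] using ψ.le_opNorm z
      linarith [(abs_le.1 h2').1]
    have h5 : (‖z‖ - ‖c‖)^2 ≤ ‖z - c‖^2 := by
      calc (‖z‖ - ‖c‖)^2 = |‖z‖ - ‖c‖|^2 := (sq_abs _).symm
        _ ≤ ‖z - c‖^2 := pow_le_pow_left₀ (abs_nonneg _) (abs_norm_sub_norm_le z c) 2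
    simp only [hq, hK]
    nlinarith [norm_nonneg z, norm_nonneg ψ, norm_nonneg c, sq_nonneg (‖z‖ - (‖ψ‖ + ‖c‖))]
  obtain ⟨x₀, hx₀⟩ := hproper
  have hfx₀ : f x₀ = (((f x₀).toReal : ℝ) : EReal) := (EReal.coe_toReal hx₀ (hbot x₀)).symm
  set T : Set ℝ := {r | ∃ z, f z + ((q z : ℝ) : EReal) ≤ (r : EReal)} with hT
  have hTne : T.Nonempty := by
    refine ⟨(f x₀).toReal + q x₀, x₀, ?_⟩
    rw [EReal.coe_add, ← hfx₀]
  have hTbdd : BddBelow T := by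
    refine ⟨K, ?_⟩
    rintro r ⟨z, hz⟩
    exact EReal.coe_le_coe_iff.1 ((hlow z).trans hz)
  set m : ℝ := sInf T with hm
  have hm_le : ∀ z, (m : EReal) ≤ f z + ((q z : ℝ) : EReal) := by
    intro z
    rcases eq_or_ne (f z) ⊤ with h | h
    · rw [h, EReal.top_add_coe]; exact le_top
    have hz1 : f z = (((f z).toReal : ℝ) : EReal) := (EReal.coe_toReal h (hbot z)).symm
    have hmem : (f z).toReal + q z ∈ T := ⟨z, by rw [EReal.coe_add, ← hz1]⟩
    calc (m : EReal) ≤ (((f z).toReal + q z : ℝ) : EReal) :=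
          EReal.coe_le_coe_iff.2 (csInf_le hTbdd hmem)
      _ = f z + ((q z : ℝ) : EReal) := by rw [EReal.coe_add, ← hz1]
  have hm_ex : ∀ ε : ℝ, 0 < ε → ∃ z, f z + ((q z : ℝ) : EReal) ≤ ((m + ε : ℝ) : EReal) := by
    intro ε hε
    obtain ⟨r, hrT, hrlt⟩ := (csInf_lt_iff hTbdd hTne).1 (by linarith : sInf T < m + ε)
    obtain ⟨z, hz⟩ := hrT
    exact ⟨z, hz.trans (EReal.coe_le_coe_iff.2 hrlt.le)⟩
  -- minimizing sequence
  have hseq : ∀ n : ℕ, ∃ z, f z + ((q z : ℝ) : EReal) ≤ ((m + (1/2)^n : ℝ) : EReal) :=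
    fun n => hm_ex _ (by positivity)
  choose zs hzs using hseq
  have hfne : ∀ n, f (zs n) ≠ ⊤ := by
    intro n h
    have := hzs n
    rw [h, EReal.top_add_coe] at this
    exact (EReal.coe_ne_top _) (top_le_iff.1 this)
  set r : ℕ → ℝ := fun n => (f (zs n)).toReal with hr
  have hfr : ∀ n, f (zs n) = ((r n : ℝ) : EReal) := fun n =>
    (EReal.coe_toReal (hfne n) (hbot _)).symm
  have hub : ∀ n, r n + q (zs n) ≤ m + (1/2)^n := by
    intro n
    have := hzs n
    rw [hfr n, ← EReal.coe_add] at this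
    exact EReal.coe_le_coe_iff.1 this
  have hlb : ∀ n, m ≤ r n + q (zs n) := by
    intro n
    have := hm_le (zs n)
    rw [hfr n, ← EReal.coe_add] at this
    exact EReal.coe_le_coe_iff.1 this
  -- strong convexity estimate
  have hkey : ∀ n k : ℕ, ‖zs n - zs k‖^2 ≤ 8 * ((1/2)^n + (1/2)^k) := by
    intro n k
    set mid := (1/2 : ℝ) • zs n + (1 - (1/2 : ℝ)) • zs k with hmid
    have hconv' : f mid ≤ (((1/2) * r n + (1/2) * r k : ℝ) : EReal) := by
      refine (hconv (zs n) (zs k) (1/2) (by norm_num) (by norm_num)).trans ?_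
      rw [hfr n, hfr k, ← EReal.coe_mul, ← EReal.coe_mul, ← EReal.coe_add]
      norm_num
    have hqmid : q mid = (1/2) * q (zs n) + (1/2) * q (zs k) - ‖zs n - zs k‖^2/8 := by
      have ha : mid - c = (1/2 : ℝ) • ((zs n - c) + (zs k - c)) := by
        simp only [hmid]; module
      have hb : zs n - zs k = (zs n - c) - (zs k - c) := by module
      have hpar := parallelogram_law_with_norm ℝ (zs n - c) (zs k - c)
      have hp2 : ‖zs n - c + (zs k - c)‖^2 + ‖zs n - c - (zs k - c)‖^2
          = 2 * (‖zs n - c‖^2 + ‖zs k - c‖^2) := by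
        exact hpar
      have hmc : ‖mid - c‖^2 = (1/4) * ‖zs n - c + (zs k - c)‖^2 := by
        rw [ha, norm_smul, Real.norm_eq_abs, abs_of_nonneg (by norm_num : (0:ℝ) ≤ 1/2)]
        ring
      simp only [hq]
      rw [hmc, ← hb] at *
      linarith [hp2]
    have h6 : (m : EReal) ≤ f mid + ((q mid : ℝ) : EReal) := hm_le mid
    have h7 : f mid + ((q mid : ℝ) : EReal) ≤ (((1/2) * r n + (1/2) * r k + q mid : ℝ) : EReal) := by
      rw [EReal.coe_add]
      exact add_le_add_left hconv' _
    have h8 : m ≤ (1/2) * r n + (1/2) * r k + q mid :=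
      EReal.coe_le_coe_iff.1 (h6.trans h7)
    have h9 := hub n; have h10 := hub k
    rw [hqmid] at h8
    linarith [pow_nonneg (by norm_num : (0:ℝ) ≤ 1/2) n, pow_nonneg (by norm_num : (0:ℝ) ≤ 1/2) k]
  have hcauchy : CauchySeq zs := by
    apply cauchySeq_of_le_tendsto_0 (fun N => Real.sqrt (8 * ((1/2)^N + (1/2)^N)))
    · intro n k N hn hk
      rw [dist_eq_norm]
      have h1 : ‖zs n - zs k‖^2 ≤ 8 * ((1/2)^N + (1/2)^N) := by
        have h2 : ((1:ℝ)/2)^n ≤ (1/2)^N := pow_le_pow_of_le_one (by norm_num) (by norm_num) hn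
        have h3 : ((1:ℝ)/2)^k ≤ (1/2)^N := pow_le_pow_of_le_one (by norm_num) (by norm_num) hk
        linarith [hkey n k]
      calc ‖zs n - zs k‖ = Real.sqrt (‖zs n - zs k‖^2) := (Real.sqrt_sq (norm_nonneg _)).symm
        _ ≤ _ := Real.sqrt_le_sqrt h1
    · have h1 : Tendsto (fun N : ℕ => 8 * ((1/2 : ℝ)^N + (1/2)^N)) atTop (𝓝 (8 * (0 + 0))) := by
        exact (tendsto_const_nhds.mul ((tendsto_pow_atTop_nhds_zero_of_lt_one (by norm_num) (by norm_num)).add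
          (tendsto_pow_atTop_nhds_zero_of_lt_one (by norm_num) (by norm_num))))
      have h2 := (Real.continuous_sqrt.tendsto (8 * (0 + 0) : ℝ)).comp h1
      have h3 : Real.sqrt (8 * (0 + 0)) = 0 := by norm_num
      rw [h3] at h2
      exact h2
  obtain ⟨zlim, hzlim⟩ := cauchySeq_tendsto_of_complete hcauchy
  have hqcont : Tendsto (fun n => q (zs n)) atTop (𝓝 (q zlim)) := by
    have hc : Continuous q := ((continuous_id.sub continuous_const).norm.pow 2).div_const 2
    exact (hc.tendsto zlim).comp hzlim
  -- f zlim ≤ m - q zlim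
  have hflim : f zlim ≤ ((m - q zlim : ℝ) : EReal) := by
    by_contra h
    push_neg at h
    obtain ⟨b, hb1, hb2⟩ := EReal.exists_between_coe_real h
    have hev1 : ∀ᶠ n in atTop, (b : EReal) < f (zs n) :=
      hzlim.eventually (hlsc zlim b hb2)
    have hev2 : ∀ᶠ n in atTop, m + (1/2)^n - q (zs n) < b := by
      have h1 : Tendsto (fun n => m + (1/2 : ℝ)^n - q (zs n)) atTop (𝓝 (m + 0 - q zlim)) :=
        (tendsto_const_nhds.add (tendsto_pow_atTop_nhds_zero_of_lt_one (by norm_num) (by norm_num))).sub hqcont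
      have h2 : m + 0 - q zlim < b := by
        rw [add_zero]
        exact_mod_cast hb1
      exact h1.eventually_lt_const h2
    obtain ⟨n, hn1, hn2⟩ := (hev1.and hev2).exists
    rw [hfr n] at hn1
    have : b < r n := EReal.coe_lt_coe_iff.1 hn1
    have := hub n
    linarith
  have hflimne : f zlim ≠ ⊤ := fun h => by rw [h] at hflim; exact (EReal.coe_ne_top _) (top_le_iff.1 hflim)
  refine ⟨zlim, hflimne, ?_⟩
  intro z
  have h1 : f zlim + ((q zlim : ℝ) : EReal) ≤ (m : EReal) := by
    calc f zlim + ((q zlim : ℝ) : EReal) ≤ ((m - q zlim : ℝ) : EReal) + ((q zlim : ℝ) : EReal) :=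
          add_le_add_left hflim _
      _ = (m : EReal) := by rw [← EReal.coe_add]; norm_num
  exact h1.trans (hm_le z)

lemma min_subgrad (f : H → EReal)
    (hbot : ∀ x, f x ≠ ⊥)
    (hconv : ∀ x y : H, ∀ t : ℝ, 0 ≤ t → t ≤ 1 →
      f (t • x + (1 - t) • y) ≤ (t : EReal) * f x + ((1 - t : ℝ) : EReal) * f y)
    (c zs : H) (hne : f zs ≠ ⊤)
    (hmin : ∀ z, f zs + ((‖zs - c‖^2/2 : ℝ) : EReal) ≤ f z + ((‖z - c‖^2/2 : ℝ) : EReal)) :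
    (c - zs) ∈ subdiff f zs := by
  intro v
  rcases eq_or_ne (f v) ⊤ with hv | hv
  · rw [hv]; exact le_top
  set rs : ℝ := (f zs).toReal with hrs
  have hfzs : f zs = (rs : EReal) := (EReal.coe_toReal hne (hbot zs)).symm
  set rv : ℝ := (f v).toReal with hrv
  have hfv : f v = (rv : EReal) := (EReal.coe_toReal hv (hbot v)).symm
  rcases eq_or_ne v zs with hvz | hvz
  · rw [hvz, hfzs]
    simp
  -- key real inequality for t ∈ (0,1]
  have hkey : ∀ t : ℝ, 0 < t → t ≤ 1 →
      rs - rv ≤ (inner ℝ (zs - c) (v - zs) : ℝ) + t/2 * ‖v - zs‖^2 := by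
    intro t ht ht1
    set zt : H := t • v + (1 - t) • zs with hzt
    have h1 : f zt ≤ ((t * rv + (1 - t) * rs : ℝ) : EReal) := by
      refine (hconv v zs t ht.le ht1).trans ?_
      rw [hfv, hfzs, ← EReal.coe_mul, ← EReal.coe_mul, ← EReal.coe_add]
    have h2 := hmin zt
    rw [hfzs] at h2
    have hztne : f zt ≠ ⊤ := by
      intro h
      rw [h] at h1
      exact (EReal.coe_ne_top _) (top_le_iff.1 h1)
    set rt : ℝ := (f zt).toReal with hrt
    have hfzt : f zt = (rt : EReal) := (EReal.coe_toReal hztne (hbot zt)).symm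
    rw [hfzt] at h1 h2
    have h1' : rt ≤ t * rv + (1 - t) * rs := EReal.coe_le_coe_iff.1 h1
    have h2' : rs + ‖zs - c‖^2/2 ≤ rt + ‖zt - c‖^2/2 := by
      rw [← EReal.coe_add, ← EReal.coe_add] at h2
      exact EReal.coe_le_coe_iff.1 h2
    -- expand the quadratic
    have hq : ‖zt - c‖^2 = ‖zs - c‖^2 + 2 * t * (inner ℝ (zs - c) (v - zs) : ℝ)
        + t^2 * ‖v - zs‖^2 := by
      have ha : zt - c = (zs - c) + t • (v - zs) := by simp only [hzt]; module
      rw [ha]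
      rw [@norm_add_sq_real]
      rw [real_inner_smul_right, norm_smul, Real.norm_eq_abs, abs_of_pos ht]
      ring
    rw [hq] at h2'
    have h3 : t * (rs - rv) ≤ t * (inner ℝ (zs - c) (v - zs) : ℝ) + t^2/2 * ‖v - zs‖^2 := by
      nlinarith
    have h4 := (mul_le_mul_iff_right₀ ht).1 (by linarith : t * (rs - rv) ≤ t * ((inner ℝ (zs - c) (v - zs) : ℝ) + t/2 * ‖v - zs‖^2))
    linarith
  -- let t → 0
  have hfinal : rs - rv ≤ (inner ℝ (zs - c) (v - zs) : ℝ) := by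
    by_contra h
    push_neg at h
    set ε : ℝ := (rs - rv) - (inner ℝ (zs - c) (v - zs) : ℝ) with hε
    have hεpos : 0 < ε := by simp only [hε]; linarith
    have hnrm : 0 < ‖v - zs‖^2 := by
      have hne0 : v - zs ≠ 0 := sub_ne_zero.2 hvz
      have := norm_pos_iff.2 hne0
      positivity
    set t : ℝ := min 1 (ε / ‖v - zs‖^2) with ht
    have htpos : 0 < t := lt_min one_pos (by positivity)
    have ht1 : t ≤ 1 := min_le_left _ _
    have := hkey t htpos ht1
    have h5 : t/2 * ‖v - zs‖^2 ≤ ε/2 := by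
      have h6 : t ≤ ε / ‖v - zs‖^2 := min_le_right _ _
      have := mul_le_mul_of_nonneg_right h6 (le_of_lt hnrm)
      rw [div_mul_cancel₀ _ (ne_of_gt hnrm)] at this
      linarith
    simp only [hε] at *
    linarith
  rw [hfzs, hfv]
  have hin : (inner ℝ (c - zs) (v - zs) : ℝ) = -(inner ℝ (zs - c) (v - zs) : ℝ) := by
    rw [← inner_neg_left]
    congr 1
    module
  rw [← EReal.coe_add]
  apply EReal.coe_le_coe_iff.2
  rw [hin]
  linarith

lemma subdiff_ne_top (f : H → EReal) (hproper : ∃ x, f x ≠ ⊤)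
    {x u : H} (hu : u ∈ subdiff f x) : f x ≠ ⊤ := by
  intro h
  obtain ⟨v, hv⟩ := hproper
  have := hu v
  rw [h, EReal.top_add_coe] at this
  exact hv (top_le_iff.1 this)

end Helpers

theorem stmt_11 {H : Type*} [NormedAddCommGroup H] [InnerProductSpace ℝ H]
    [CompleteSpace H] (f : H → EReal)
    (hbot : ∀ x, f x ≠ ⊥)
    (hproper : ∃ x, f x ≠ ⊤)
    (hconv : ∀ x y : H, ∀ t : ℝ, 0 ≤ t → t ≤ 1 →
      f (t • x + (1 - t) • y) ≤ (t : EReal) * f x + ((1 - t : ℝ) : EReal) * f y)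
    (hlsc : LowerSemicontinuous f) :
    (∀ x y u v : H, u ∈ subdiff f x → v ∈ subdiff f y →
        (0 : ℝ) ≤ (inner ℝ (x - y) (u - v) : ℝ)) ∧
    (∀ A : H → Set H,
      (∀ x y u v : H, u ∈ A x → v ∈ A y → (0 : ℝ) ≤ (inner ℝ (x - y) (u - v) : ℝ)) →
      (∀ x, subdiff f x ⊆ A x) → ∀ x, A x = subdiff f x) := by
  have hmono : ∀ x y u v : H, u ∈ subdiff f x → v ∈ subdiff f y →
      (0 : ℝ) ≤ (inner ℝ (x - y) (u - v) : ℝ) := by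
    intro x y u v hu hv
    have hxt : f x ≠ ⊤ := subdiff_ne_top f hproper hu
    have hyt : f y ≠ ⊤ := subdiff_ne_top f hproper hv
    set rx : ℝ := (f x).toReal with hrx
    set ry : ℝ := (f y).toReal with hry
    have hfx : f x = (rx : EReal) := (EReal.coe_toReal hxt (hbot x)).symm
    have hfy : f y = (ry : EReal) := (EReal.coe_toReal hyt (hbot y)).symm
    have h1 := hu y; have h2 := hv x
    rw [hfx, hfy, ← EReal.coe_add] at h1
    rw [hfy, hfx, ← EReal.coe_add] at h2
    have h1' : rx + (inner ℝ u (y - x) : ℝ) ≤ ry := EReal.coe_le_coe_iff.1 h1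
    have h2' : ry + (inner ℝ v (x - y) : ℝ) ≤ rx := EReal.coe_le_coe_iff.1 h2
    have e : (inner ℝ (x - y) (u - v) : ℝ)
        = -(inner ℝ u (y - x) : ℝ) - (inner ℝ v (x - y) : ℝ) := by
      simp only [inner_sub_left, inner_sub_right]
      rw [real_inner_comm x u, real_inner_comm y u, real_inner_comm x v, real_inner_comm y v]
      ring
    rw [e]; linarith
  refine ⟨hmono, ?_⟩
  intro A hA hsub x
  refine Set.Subset.antisymm ?_ (hsub x)
  intro u hu
  have hmin := affine_minorant f hbot hproper hconv hlsc
  obtain ⟨zs, hne, hminz⟩ := prox_exists f hbot hproper hconv hlsc hmin (x + u)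
  have hw : (x + u - zs) ∈ subdiff f zs := min_subgrad f hbot hconv (x + u) zs hne hminz
  have hwA : (x + u - zs) ∈ A zs := hsub zs hw
  have h0 := hA x zs u (x + u - zs) hu hwA
  have e : (inner ℝ (x - zs) (u - (x + u - zs)) : ℝ) = -‖x - zs‖^2 := by
    have h1 : u - (x + u - zs) = -(x - zs) := by module
    rw [h1, inner_neg_right, real_inner_self_eq_norm_sq]
  rw [e] at h0
  have h2 : ‖x - zs‖ = 0 := by nlinarith [norm_nonneg (x - zs), sq_nonneg ‖x - zs‖]
  have h3 : zs = x := by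
    have := sub_eq_zero.1 (norm_eq_zero.1 h2)
    exact this.symm
  rw [h3] at hw
  have h5 : x + u - x = u := by module
  rw [h5] at hw
  exact hw
end

section
/- For vectors u_{k+1}, u_k, u_{k−1}, u_{k−2} in a real Hilbert space and w_k = u_k + θ₁(u_k − u_{k−1}) + θ₂(u_{k−1} − u_{k−2}) with θ₁ ≥ 0 and θ₂ ≤ 0, the inequality ‖u_{k+1} − w_k‖² ≥ (1 − θ₁ − |θ₂|)‖u_{k+1} − u_k‖² + (θ₁² − θ₁ − θ₁|θ₂|)‖u_k − u_{k−1}‖² + (θ₂² − |θ₂| − θ₁|θ₂|)‖u_{k−1} − u_{k−2}‖² holds. -/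
theorem stmt_18 {H : Type*} [NormedAddCommGroup H] [InnerProductSpace ℝ H]
    [CompleteSpace H] (θ₁ θ₂ : ℝ) (hθ₁ : 0 ≤ θ₁) (hθ₂ : θ₂ ≤ 0)
    (u1 u0 um1 um2 : H)
    (w : H) (hw : w = u0 + θ₁ • (u0 - um1) + θ₂ • (um1 - um2)) :
    (1 - θ₁ - |θ₂|) * ‖u1 - u0‖ ^ 2
      + (θ₁ ^ 2 - θ₁ - θ₁ * |θ₂|) * ‖u0 - um1‖ ^ 2
      + (θ₂ ^ 2 - |θ₂| - θ₁ * |θ₂|) * ‖um1 - um2‖ ^ 2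
      ≤ ‖u1 - w‖ ^ 2 := by
  have habs : |θ₂| = -θ₂ := abs_of_nonpos hθ₂
  set a := u1 - u0
  set b := u0 - um1
  set c := um1 - um2
  have hx : u1 - w = a - θ₁ • b - θ₂ • c := by
    rw [hw]; simp only [a, b, c]; abel
  rw [hx]
  have hexp : ‖a - θ₁ • b - θ₂ • c‖ ^ 2
      = ‖a‖ ^ 2 + θ₁ ^ 2 * ‖b‖ ^ 2 + θ₂ ^ 2 * ‖c‖ ^ 2
        - 2 * θ₁ * inner ℝ a b - 2 * θ₂ * inner ℝ a c
        + 2 * θ₁ * θ₂ * inner ℝ b c := by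
    simp only [← real_inner_self_eq_norm_sq, inner_sub_sub_self, inner_sub_left,
      inner_sub_right, real_inner_smul_left, real_inner_smul_right, real_inner_comm a b,
      real_inner_comm a c, real_inner_comm b c]
    ring
  rw [hexp]
  have hab : |inner ℝ a b| ≤ ‖a‖ * ‖b‖ := abs_real_inner_le_norm a b
  have hac : |inner ℝ a c| ≤ ‖a‖ * ‖c‖ := abs_real_inner_le_norm a c
  have hbc : |inner ℝ b c| ≤ ‖b‖ * ‖c‖ := abs_real_inner_le_norm b c
  have h1 := abs_le.1 hab
  have h2 := abs_le.1 hac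
  have h3 := abs_le.1 hbc
  have hna : (0:ℝ) ≤ ‖a‖ := norm_nonneg a
  have hnb : (0:ℝ) ≤ ‖b‖ := norm_nonneg b
  have hnc : (0:ℝ) ≤ ‖c‖ := norm_nonneg c
  rw [habs]
  nlinarith [sq_nonneg (‖a‖ - ‖b‖), sq_nonneg (‖a‖ - ‖c‖), sq_nonneg (‖b‖ - ‖c‖),
    mul_nonneg hθ₁ (neg_nonneg.2 hθ₂), h1.1, h1.2, h2.1, h2.2, h3.1, h3.2,
    mul_le_mul_of_nonneg_left h1.2 hθ₁,
    mul_le_mul_of_nonneg_left h2.1 (neg_nonneg.2 hθ₂)]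
end
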